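/- In the abstract serial database model with unbounded dependency lists, let τ be a valid serial execution and let S be a read snapshot over τ that passes the consistency check. Then for any two pairs (o, v) ∈ S and (o', v') ∈ S with (o, v) ≠ (o', v'), and for every w > v', the pair (o, v) does not depend on (o', w) with respect to τ. That is, no version read by a check-passing read-only transaction depends on a strictly newer version of another object read by the same transaction. -/

import Mathlib

/-- An update transaction: read set `R`, write set `W`, and version `v`. -/
structure Txn (ι : Type*) where
  R : Finset ι
  W : Finset ι
  v : ℕ

/-- A database state: a current version for each object and a dependency list
(here an unbounded set of identifier/version pairs) for each object. -/
structure DBState (ι : Type*) where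
  ver : ι → ℕ
  dep : ι → Set (ι × ℕ)

/-- The initial state: all versions `0`, all dependency lists empty. -/
def initState (ι : Type*) : DBState ι :=
  { ver := fun _ => 0, dep := fun _ => ∅ }

/-- Executing a transaction `T` in state `st`: with
`full = ⋃ k ∈ T.R, ({(k, if k ∈ T.W then T.v else st.ver k)} ∪ st.dep k)`,
every `o ∈ T.W` gets version `T.v` and dependency list `full \ {(o, T.v)}`;
objects outside `T.W` are unchanged. -/
def step {ι : Type*} [DecidableEq ι] (st : DBState ι) (T : Txn ι) : DBState ι :=
  let full : Set (ι × ℕ) :=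
    ⋃ k ∈ (T.R : Set ι), ({(k, if k ∈ T.W then T.v else st.ver k)} ∪ st.dep k)
  { ver := fun o => if o ∈ T.W then T.v else st.ver o
    dep := fun o => if o ∈ T.W then full \ {(o, T.v)} else st.dep o }

/-- The state reached by executing the transactions of `τ` in order from the
initial state. -/
def run {ι : Type*} [DecidableEq ι] (τ : List (Txn ι)) : DBState ι :=
  τ.foldl step (initState ι)

/-- A serial execution: the transactions have pairwise distinct positive versions,
and each transaction reads every object it writes. -/
def SerialExec {ι : Type*} (τ : List (Txn ι)) : Prop :=
  (τ.map Txn.v).Nodup ∧ ∀ T ∈ τ, 0 < T.v ∧ T.W ⊆ T.R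

/-- `τ` is valid: whenever a transaction executes, its version is strictly larger
than the current version of every object in its read set. -/
def Valid {ι : Type*} [DecidableEq ι] (τ : List (Txn ι)) : Prop :=
  ∀ p T s, τ = p ++ T :: s → ∀ k ∈ T.R, (run p).ver k < T.v

/-- Direct dependency w.r.t. `τ`: `(o, u) ⇝ (d, w)` iff some transaction `T` of `τ`,
executed in the state reached after the prefix `p`, has `o ∈ T.W`, `u = T.v`,
`d ∈ T.R`, `(d, w) ≠ (o, T.v)` and `w = (if d ∈ T.W then T.v else (run p).ver d)`. -/
def DirectDep {ι : Type*} [DecidableEq ι] (τ : List (Txn ι)) (x y : ι × ℕ) : Prop :=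
  ∃ p T s, τ = p ++ T :: s ∧ x.1 ∈ T.W ∧ x.2 = T.v ∧ y.1 ∈ T.R ∧
    y ≠ (x.1, T.v) ∧ y.2 = (if y.1 ∈ T.W then T.v else (run p).ver y.1)

/-- `(o, u)` depends on `(d, w)`: the transitive closure of direct dependency. -/
def TxnDependsOn {ι : Type*} [DecidableEq ι] (τ : List (Txn ι)) : ι × ℕ → ι × ℕ → Prop :=
  Relation.TransGen (DirectDep τ)

/-- A read snapshot over `τ`: a finite set of (object, version) pairs with pairwise
distinct objects, each version being either `0` or a version installed for that
object by some transaction of `τ`. -/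
def Snapshot {ι : Type*} (τ : List (Txn ι)) (S : Finset (ι × ℕ)) : Prop :=
  (∀ x ∈ S, ∀ y ∈ S, x ≠ y → x.1 ≠ y.1) ∧
  ∀ x ∈ S, x.2 = 0 ∨ ∃ p T s, τ = p ++ T :: s ∧ x.1 ∈ T.W ∧ x.2 = T.v

/-- `S` passes the T-Cache consistency check: there are no `(o, v) ∈ S` and
`(k, w') ∈ S` such that the dependency list of `o`, in the state immediately after
the transaction of `τ` that installed version `v` of `o`, contains a pair `(k, w)`
with `w > w'` (for `v = 0` the dependency list is empty, and no installing
transaction exists since versions are positive). -/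
def PassesCheck {ι : Type*} [DecidableEq ι] (τ : List (Txn ι))
    (S : Finset (ι × ℕ)) : Prop :=
  ¬ ∃ o v k w w', (o, v) ∈ S ∧ (k, w') ∈ S ∧ w' < w ∧
    ∃ p T s, τ = p ++ T :: s ∧ o ∈ T.W ∧ v = T.v ∧ (k, w) ∈ (run (p ++ [T])).dep o

/-- Two update transactions conflict if one writes an object the other reads. -/
def Conflict {ι : Type*} [DecidableEq ι] (T T' : Txn ι) : Prop :=
  (T.W ∩ T'.R).Nonempty ∨ (T'.W ∩ T.R).Nonempty

/-- `τ'` is a conflict-equivalent permutation of `τ`: it is a permutation of `τ`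
that preserves the relative order of every pair of conflicting transactions. -/
def ConflictEquiv {ι : Type*} [DecidableEq ι] (τ τ' : List (Txn ι)) : Prop :=
  τ.Perm τ' ∧ ∀ T T', Conflict T T' → ([T, T'].Sublist τ ↔ [T, T'].Sublist τ')

section Aux

variable {ι : Type*} [DecidableEq ι] {τ : List (Txn ι)}

lemma run_append (p : List (Txn ι)) (T : Txn ι) : run (p ++ [T]) = step (run p) T := by
  simp [run, List.foldl_append]

lemma concat_prefix_iff {p : List (Txn ι)} {T : Txn ι} :
    p ++ [T] <+: τ ↔ ∃ s, τ = p ++ T :: s := by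
  constructor
  · rintro ⟨s, rfl⟩; exact ⟨s, by simp⟩
  · rintro ⟨s, rfl⟩; exact ⟨s, by simp⟩

lemma step_ver_pos {st : DBState ι} {T : Txn ι} {a : ι} (ha : a ∈ T.W) :
    (step st T).ver a = T.v := by simp [step, ha]

lemma step_ver_neg {st : DBState ι} {T : Txn ι} {a : ι} (ha : a ∉ T.W) :
    (step st T).ver a = st.ver a := by simp [step, ha]

lemma step_dep_neg {st : DBState ι} {T : Txn ι} {a : ι} (ha : a ∉ T.W) :
    (step st T).dep a = st.dep a := by simp [step, ha]

lemma mem_step_dep {st : DBState ι} {T : Txn ι} {a : ι} (ha : a ∈ T.W) {x : ι × ℕ} :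
    x ∈ (step st T).dep a ↔
      (∃ j ∈ T.R, x = (j, if j ∈ T.W then T.v else st.ver j) ∨ x ∈ st.dep j) ∧
        x ≠ (a, T.v) := by
  simp only [step, if_pos ha, Set.mem_diff, Set.mem_iUnion, Set.mem_union,
    Set.mem_singleton_iff, Finset.mem_coe, exists_prop]

end Aux
set_option linter.unusedSectionVars false

section Aux2

variable {ι : Type*} [DecidableEq ι] {τ : List (Txn ι)}

lemma mem_of_decomp {p s : List (Txn ι)} {T : Txn ι} (h : τ = p ++ T :: s) : T ∈ τ := by
  rw [h]; simp

lemma decomp_unique (hse : SerialExec τ) {p1 T1 s1 p2 T2 s2 : _} (h1 : τ = p1 ++ T1 :: s1)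
    (h2 : τ = p2 ++ T2 :: s2) (hv : T1.v = T2.v) : p1 = p2 ∧ T1 = T2 ∧ s1 = s2 := by
  have hget : ∀ (L : List ℕ) (a : ℕ) (r : List ℕ) (i : ℕ) (hi : i = L.length),
      (L ++ a :: r)[i]'(by simp [hi]) = a := by
    intro L a r i hi
    subst hi
    rw [List.getElem_append_right (le_refl _)]
    simp
  have h1' : τ.map Txn.v = p1.map Txn.v ++ T1.v :: s1.map Txn.v := by rw [h1]; simp
  have h2' : τ.map Txn.v = p2.map Txn.v ++ T2.v :: s2.map Txn.v := by rw [h2]; simp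
  have e1 : (τ.map Txn.v)[p1.length]'(by rw [h1]; simp) = T1.v :=
    (List.getElem_of_eq h1' _).trans (hget _ _ _ _ (by simp))
  have e2 : (τ.map Txn.v)[p2.length]'(by rw [h2]; simp) = T2.v :=
    (List.getElem_of_eq h2' _).trans (hget _ _ _ _ (by simp))
  have hlen : p1.length = p2.length :=
    (hse.1.getElem_inj_iff).mp (e1.trans (hv.trans e2.symm))
  obtain ⟨hp, ht⟩ := List.append_inj (h1.symm.trans h2) hlen
  injection ht with hT hS
  exact ⟨hp, hT, hS⟩

lemma ver_mono_step (hse : SerialExec τ) (hval : Valid τ) {p s : List (Txn ι)} {T : Txn ι}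
    (h : τ = p ++ T :: s) (k : ι) : (run p).ver k ≤ (run (p ++ [T])).ver k := by
  rw [run_append]
  by_cases hk : k ∈ T.W
  · rw [step_ver_pos hk]
    exact le_of_lt (hval p T s h k ((hse.2 T (mem_of_decomp h)).2 hk))
  · rw [step_ver_neg hk]

lemma ver_mono (hse : SerialExec τ) (hval : Valid τ) {p q : List (Txn ι)}
    (hpq : p <+: q) (hq : q <+: τ) (k : ι) : (run p).ver k ≤ (run q).ver k := by
  obtain ⟨r, rfl⟩ := hpq
  induction r generalizing p with
  | nil => simp
  | cons T r ih =>
    obtain ⟨s2, hs2⟩ := hq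
    have hτ : τ = p ++ T :: (r ++ s2) := by rw [← hs2]; simp
    have h1 : (p ++ [T]) ++ r <+: τ := ⟨s2, by rw [← hs2]; simp⟩
    calc (run p).ver k ≤ (run (p ++ [T])).ver k := ver_mono_step hse hval hτ k
      _ ≤ (run ((p ++ [T]) ++ r)).ver k := ih h1
      _ = (run (p ++ T :: r)).ver k := by simp

lemma dep_ver_le (hse : SerialExec τ) (hval : Valid τ) :
    ∀ p, p <+: τ → ∀ a (x : ι × ℕ), x ∈ (run p).dep a → x.2 ≤ (run p).ver x.1 := by
  intro p
  induction p using List.reverseRecOn with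
  | nil => intro _ a x hx; simp [run, initState] at hx
  | append_singleton q T ih =>
    intro hq a x hx
    obtain ⟨s, hs⟩ := concat_prefix_iff.mp hq
    have hqτ : q <+: τ := ⟨T :: s, by rw [hs]⟩
    have hqp : q <+: q ++ [T] := ⟨[T], rfl⟩
    by_cases ha : a ∈ T.W
    · rw [run_append, mem_step_dep ha] at hx
      obtain ⟨⟨j, hj, hcase⟩, -⟩ := hx
      rcases hcase with he | hd
      · rw [he]
        by_cases hjW : j ∈ T.W <;> simp [run_append, step, hjW]
      · exact le_trans (ih hqτ j x hd) (ver_mono hse hval hqp hq x.1)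
    · rw [run_append, step_dep_neg ha] at hx
      exact le_trans (ih hqτ a x hx) (ver_mono hse hval hqp hq x.1)

lemma dep_mono_step (hse : SerialExec τ) (hval : Valid τ) {p s : List (Txn ι)} {T : Txn ι}
    (h : τ = p ++ T :: s) (a : ι) : (run p).dep a ⊆ (run (p ++ [T])).dep a := by
  intro x hx
  rw [run_append]
  by_cases ha : a ∈ T.W
  · rw [mem_step_dep ha]
    refine ⟨⟨a, (hse.2 T (mem_of_decomp h)).2 ha, Or.inr hx⟩, ?_⟩
    intro heq
    have h1 := dep_ver_le hse hval p ⟨T :: s, h.symm⟩ a x hx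
    rw [heq] at h1
    have h2 := hval p T s h a ((hse.2 T (mem_of_decomp h)).2 ha)
    simp at h1
    omega
  · rw [step_dep_neg ha]; exact hx

lemma dep_mono (hse : SerialExec τ) (hval : Valid τ) {p q : List (Txn ι)}
    (hpq : p <+: q) (hq : q <+: τ) (a : ι) : (run p).dep a ⊆ (run q).dep a := by
  obtain ⟨r, rfl⟩ := hpq
  induction r generalizing p with
  | nil => simp
  | cons T r ih =>
    obtain ⟨s2, hs2⟩ := hq
    have hτ : τ = p ++ T :: (r ++ s2) := by rw [← hs2]; simp
    have h1 : (p ++ [T]) ++ r <+: τ := ⟨s2, by rw [← hs2]; simp⟩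
    have : (run (p ++ T :: r)).dep a = (run ((p ++ [T]) ++ r)).dep a := by simp
    rw [this]
    exact subset_trans (dep_mono_step hse hval hτ a) (ih h1)

end Aux2
section Aux3

variable {ι : Type*} [DecidableEq ι] {τ : List (Txn ι)}

lemma ver_installed (hse : SerialExec τ) (hval : Valid τ) :
    ∀ p, p <+: τ → ∀ k, (run p).ver k = 0 ∨
      ∃ p'' T'' s'', τ = p'' ++ T'' :: s'' ∧ k ∈ T''.W ∧ T''.v = (run p).ver k := by
  intro p
  induction p using List.reverseRecOn with
  | nil => intro _ k; left; simp [run, initState]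
  | append_singleton q T ih =>
    intro hq k
    obtain ⟨s, hs⟩ := concat_prefix_iff.mp hq
    have hqτ : q <+: τ := ⟨T :: s, by rw [hs]⟩
    by_cases hk : k ∈ T.W
    · exact Or.inr ⟨q, T, s, hs, hk, by rw [run_append, step_ver_pos hk]⟩
    · rw [run_append, step_ver_neg hk]
      exact ih hqτ k

lemma dep_installed (hse : SerialExec τ) (hval : Valid τ) :
    ∀ p, p <+: τ → ∀ a (x : ι × ℕ), x ∈ (run p).dep a → x.2 = 0 ∨
      ∃ p'' T'' s'', τ = p'' ++ T'' :: s'' ∧ x.1 ∈ T''.W ∧ T''.v = x.2 := by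
  intro p
  induction p using List.reverseRecOn with
  | nil => intro _ a x hx; simp [run, initState] at hx
  | append_singleton q T ih =>
    intro hq a x hx
    obtain ⟨s, hs⟩ := concat_prefix_iff.mp hq
    have hqτ : q <+: τ := ⟨T :: s, by rw [hs]⟩
    by_cases ha : a ∈ T.W
    · rw [run_append, mem_step_dep ha] at hx
      obtain ⟨⟨j, hj, hcase⟩, -⟩ := hx
      rcases hcase with he | hd
      · by_cases hjW : j ∈ T.W
        · exact Or.inr ⟨q, T, s, hs, by rw [he]; simpa [hjW] using hjW, by rw [he]; simp [hjW]⟩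
        · rw [he]
          simpa [hjW] using ver_installed hse hval q hqτ j
      · exact ih hqτ j x hd
    · rw [run_append, step_dep_neg ha] at hx
      exact ih hqτ a x hx

lemma install_prefix (hse : SerialExec τ) (hval : Valid τ) {p : List (Txn ι)} (hp : p <+: τ)
    {k : ι} {u : ℕ} (hu : u ≤ (run p).ver k) {p'' s'' : List (Txn ι)} {T'' : Txn ι}
    (h : τ = p'' ++ T'' :: s'') (hk : k ∈ T''.W) (hv : T''.v = u) :
    p'' ++ [T''] <+: p := by
  have h2 : p'' ++ [T''] <+: τ := concat_prefix_iff.mpr ⟨s'', h⟩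
  rcases le_or_gt (p''.length + 1) p.length with hle | hlt
  · exact List.prefix_of_prefix_length_le h2 hp (by simpa using hle)
  · exfalso
    have hpp : p <+: p'' := List.prefix_of_prefix_length_le hp ⟨T'' :: s'', h.symm⟩ (by omega)
    have h3 := ver_mono hse hval hpp ⟨T'' :: s'', h.symm⟩ k
    have h4 := hval p'' T'' s'' h k ((hse.2 T'' (mem_of_decomp h)).2 hk)
    omega

lemma install_mono (hse : SerialExec τ) (hval : Valid τ) {p1 T1 s1 p2 T2 s2 : _}
    (h1 : τ = p1 ++ T1 :: s1) (h2 : τ = p2 ++ T2 :: s2) {k : ι}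
    (hk1 : k ∈ T1.W) (hk2 : k ∈ T2.W) (hv : T1.v ≤ T2.v) :
    p1 ++ [T1] <+: p2 ++ [T2] := by
  rcases eq_or_lt_of_le hv with he | hlt
  · obtain ⟨rfl, rfl, rfl⟩ := decomp_unique hse h1 h2 he
    exact List.prefix_refl _
  · refine install_prefix hse hval (concat_prefix_iff.mpr ⟨s2, h2⟩) ?_ h1 hk1 rfl
    rw [run_append, step_ver_pos hk2]
    omega

lemma direct_mem (hse : SerialExec τ) {y z : ι × ℕ} (hd : DirectDep τ y z)
    {p' s' : List (Txn ι)} {T' : Txn ι}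
    (h : τ = p' ++ T' :: s') (hw : y.1 ∈ T'.W) (hv : T'.v = y.2) :
    z ∈ (run (p' ++ [T'])).dep y.1 := by
  obtain ⟨p, T, s, hps, hyW, hyv, hzR, hne, hzv⟩ := hd
  obtain ⟨rfl, rfl, rfl⟩ := decomp_unique hse hps h (by rw [← hyv, hv])
  rw [run_append, mem_step_dep hyW]
  refine ⟨⟨z.1, hzR, Or.inl ?_⟩, hne⟩
  exact Prod.ext_iff.mpr ⟨rfl, hzv⟩

end Aux3
section Aux4

variable {ι : Type*} [DecidableEq ι] {τ : List (Txn ι)}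

lemma Jlem (hse : SerialExec τ) (hval : Valid τ) :
    ∀ p, p <+: τ → ∀ a k u',
    ((k, u') ∈ (run p).dep a ∨ (k, u') = (a, (run p).ver a)) →
    ∀ p'' T'' s'', τ = p'' ++ T'' :: s'' → k ∈ T''.W → T''.v = u' →
    ∀ z ∈ (run (p'' ++ [T''])).dep k,
      ∃ w, z.2 ≤ w ∧ ((z.1, w) ∈ (run p).dep a ∨ (z.1, w) = (a, (run p).ver a)) := by
  intro p
  induction p using List.reverseRecOn with
  | nil =>
    intro _ a k u' hm p'' T'' s'' h hk hv z hz
    exfalso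
    have hpos := (hse.2 T'' (mem_of_decomp h)).1
    rcases hm with hm | hm
    · simp [run, initState] at hm
    · have : u' = 0 := by simpa [run, initState] using congrArg Prod.snd hm
      omega
  | append_singleton q T ih =>
    intro hq a k u' hm p'' T'' s'' h hk hv z hz
    obtain ⟨s, hs⟩ := concat_prefix_iff.mp hq
    have hqτ : q <+: τ := ⟨T :: s, by rw [hs]⟩
    have hWR := (hse.2 T (mem_of_decomp hs)).2
    have hule : u' ≤ (run (q ++ [T])).ver k := by
      rcases hm with hm | hm
      · exact dep_ver_le hse hval _ hq _ _ hm
      · injection hm with h1 h2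
        rw [h1, h2]
    have hinst : p'' ++ [T''] <+: q ++ [T] := install_prefix hse hval hq hule h hk hv
    have hcase : (p'' ++ [T''] <+: q) ∨ (p'' = q ∧ T'' = T) := by
      rcases lt_or_eq_of_le hinst.length_le with hlen | hlen
      · left
        refine List.prefix_of_prefix_length_le (concat_prefix_iff.mpr ⟨s'', h⟩) hqτ ?_
        simp at hlen ⊢; omega
      · right
        have := hinst.eq_of_length (by simpa using hlen)
        obtain ⟨hp, ht⟩ := List.append_inj this (by simp at hlen ⊢; omega)
        injection ht with ht hts
        exact ⟨hp, ht⟩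
    by_cases ha : a ∈ T.W
    · have haR : a ∈ T.R := hWR ha
      have hverT : (run (q ++ [T])).ver a = T.v := by rw [run_append, step_ver_pos ha]
      have key : ∀ (x : ι × ℕ),
          (∃ j ∈ T.R, x = (j, if j ∈ T.W then T.v else (run q).ver j) ∨ x ∈ (run q).dep j) →
          (x ∈ (run (q ++ [T])).dep a ∨ x = (a, (run (q ++ [T])).ver a)) := by
        intro x hx
        by_cases hxe : x = (a, T.v)
        · right; rw [hxe, hverT]
        · left; rw [run_append, mem_step_dep ha]; exact ⟨hx, hxe⟩
      rcases hcase with hcase | ⟨rfl, rfl⟩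
      · -- the install happened strictly inside q
        have hTTne : T''.v ≠ T.v := by
          intro he
          obtain ⟨rfl, rfl, -⟩ := decomp_unique hse h hs he
          have := hcase.length_le
          simp at this
        rcases hm with hm | hm
        · rw [run_append, mem_step_dep ha] at hm
          obtain ⟨⟨j, hj, hcj⟩, -⟩ := hm
          rcases hcj with hcj | hcj
          · by_cases hjW : j ∈ T.W
            · exfalso
              rw [if_pos hjW] at hcj
              injection hcj with h1 h2
              exact hTTne (hv.trans h2)
            · rw [if_neg hjW] at hcj
              injection hcj with h1 h2
              subst h1; subst h2
              obtain ⟨w, hwle, hw⟩ :=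
                ih hqτ k k ((run q).ver k) (Or.inr rfl) p'' T'' s'' h hk hv z hz
              refine ⟨w, hwle, key (z.1, w) ⟨k, hj, ?_⟩⟩
              rcases hw with hw | hw
              · exact Or.inr hw
              · exact Or.inl (by rw [hw, if_neg hjW])
          · obtain ⟨w, hwle, hw⟩ := ih hqτ j k u' (Or.inl hcj) p'' T'' s'' h hk hv z hz
            rcases hw with hw | hw
            · exact ⟨w, hwle, key (z.1, w) ⟨j, hj, Or.inr hw⟩⟩
            · injection hw with hz1 hz2
              by_cases hjW : j ∈ T.W
              · have hlt : (run q).ver j < T.v := hval q T s hs j hj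
                refine ⟨T.v, by omega, key (z.1, T.v) ⟨j, hj, Or.inl ?_⟩⟩
                rw [hz1, if_pos hjW]
              · refine ⟨w, hwle, key (z.1, w) ⟨j, hj, Or.inl ?_⟩⟩
                rw [hz1, hz2, if_neg hjW]
        · exfalso
          rw [hverT] at hm
          injection hm with h1 h2
          exact hTTne (hv.trans h2)
      · -- T'' = T is the last transaction; z is in its freshly built list
        rw [run_append, mem_step_dep hk] at hz
        obtain ⟨hzfull, -⟩ := hz
        exact ⟨z.2, le_rfl, key (z.1, z.2) hzfull⟩
    · -- a not written by T : nothing changes for a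
      have hda : (run (q ++ [T])).dep a = (run q).dep a := by
        rw [run_append, step_dep_neg ha]
      have hva : (run (q ++ [T])).ver a = (run q).ver a := by
        rw [run_append, step_ver_neg ha]
      rw [hda, hva] at hm ⊢
      rcases hcase with hcase | ⟨rfl, rfl⟩
      · exact ih hqτ a k u' hm p'' T'' s'' h hk hv z hz
      · exfalso
        rcases hm with hm | hm
        · have h1 := dep_ver_le hse hval _ hqτ a (k, u') hm
          have h2 := hval _ _ _ hs k (hWR hk)
          simp at h1
          omega
        · injection hm with h1 h2
          subst h1
          exact ha hk

end Aux4
section Aux5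

variable {ι : Type*} [DecidableEq ι] {τ : List (Txn ι)}

lemma cover_step (hse : SerialExec τ) (hval : Valid τ) {p s : List (Txn ι)} {T : Txn ι}
    (h : τ = p ++ T :: s) {o : ι} (ho : o ∈ T.W) {b c : ι × ℕ}
    (hb : ∃ w, b.2 ≤ w ∧ ((b.1, w) ∈ (run (p ++ [T])).dep o ∨ (b.1, w) = (o, T.v)))
    (hd : DirectDep τ b c) :
    ∃ w, c.2 ≤ w ∧ ((c.1, w) ∈ (run (p ++ [T])).dep o ∨ (c.1, w) = (o, T.v)) := by
  obtain ⟨w, hwle, hw⟩ := hb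
  obtain ⟨p1, T1, s1, h1, hbW, hbv, -, -, -⟩ := hd.imp (fun _ h => h)
  have hc1 : c ∈ (run (p1 ++ [T1])).dep b.1 := direct_mem hse hd h1 hbW hbv.symm
  have hpT : p ++ [T] <+: τ := concat_prefix_iff.mpr ⟨s, h⟩
  have hpos : 0 < T1.v := (hse.2 T1 (mem_of_decomp h1)).1
  have hinstw : ∃ p2 T2 s2, τ = p2 ++ T2 :: s2 ∧ b.1 ∈ T2.W ∧ T2.v = w := by
    rcases hw with hw | hw
    · rcases dep_installed hse hval (p ++ [T]) hpT o (b.1, w) hw with h0 | h2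
      · exfalso; simp at h0; omega
      · exact h2
    · injection hw with he1 he2
      exact ⟨p, T, s, h, he1 ▸ ho, he2.symm⟩
  obtain ⟨p2, T2, s2, h2, hb2, hv2⟩ := hinstw
  have hpre : p1 ++ [T1] <+: p2 ++ [T2] :=
    install_mono hse hval h1 h2 hbW hb2 (by omega)
  have hc2 : c ∈ (run (p2 ++ [T2])).dep b.1 :=
    dep_mono hse hval hpre (concat_prefix_iff.mpr ⟨s2, h2⟩) b.1 hc1
  have hverT : (run (p ++ [T])).ver o = T.v := by rw [run_append, step_ver_pos ho]
  have hm : ((b.1, w) ∈ (run (p ++ [T])).dep o ∨ (b.1, w) = (o, (run (p ++ [T])).ver o)) := by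
    rwa [hverT]
  obtain ⟨w', hw'le, hw'⟩ :=
    Jlem hse hval (p ++ [T]) hpT o b.1 w hm p2 T2 s2 h2 hb2 hv2 c hc2
  rw [hverT] at hw'
  exact ⟨w', hw'le, hw'⟩

end Aux5

/-- The paper's independence Lemma: if a read snapshot `S` over a valid serial
execution `τ` passes the consistency check, then for any two distinct pairs
`(o, v) ∈ S` and `(o', v') ∈ S` and any `w > v'`, the pair `(o, v)` does not
depend on `(o', w)` with respect to `τ`. -/
theorem no_dep_on_newer_version {ι : Type*} [DecidableEq ι] (τ : List (Txn ι))
    (hse : SerialExec τ) (hval : Valid τ)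
    (S : Finset (ι × ℕ)) (hsnap : Snapshot τ S) (hchk : PassesCheck τ S) :
    ∀ o v o' v', (o, v) ∈ S → (o', v') ∈ S → (o, v) ≠ (o', v') →
      ∀ w, v' < w → ¬ TxnDependsOn τ (o, v) (o', w) := by
  intro o v o' v' hoS ho'S hne w0 hv'w hdep
  have hoo' : o ≠ o' := hsnap.1 _ hoS _ ho'S hne
  rcases hsnap.2 _ hoS with h0 | ⟨p, T, s, hτ, hoW, hvT⟩
  · obtain ⟨c, hc, -⟩ := Relation.TransGen.head'_iff.mp hdep
    obtain ⟨p1, T1, s1, h1, -, hv1, -⟩ := hc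
    have := (hse.2 T1 (mem_of_decomp h1)).1
    simp at h0 hv1
    omega
  · simp only at hvT
    have hcov : ∀ z, TxnDependsOn τ (o, v) z →
        ∃ w, z.2 ≤ w ∧ ((z.1, w) ∈ (run (p ++ [T])).dep o ∨ (z.1, w) = (o, T.v)) := by
      intro z hz
      induction hz with
      | single hd =>
        exact cover_step hse hval hτ hoW ⟨v, le_rfl, Or.inr (by rw [hvT])⟩ hd
      | tail hz hd ih => exact cover_step hse hval hτ hoW ih hd
    obtain ⟨w, hwle, hw⟩ := hcov (o', w0) hdep
    simp only at hwle
    rcases hw with hw | hw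
    · exact hchk ⟨o, v, o', w, v', hoS, ho'S, by omega, p, T, s, hτ, hoW, hvT, hw⟩
    · exact hoo' (congrArg Prod.fst hw).symm
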